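/- Let g be a Lie algebra over a field k, X = k⊕g, R the associated Yang–Baxter operator, and f: X → X linear with f(1,0) = (s,w) and f(0,x) = (f₀(x), f₁(x)). Then the Yang–Baxter coboundary δ¹_{YB}(f) = R(f⊗1) + R(1⊗f) − (f⊗1)R − (1⊗f)R evaluated on (a,x)⊗(b,y) equals a·(1,0)⊗(0,[w,y]) + b·(1,0)⊗(0,[x,w]) + (1,0)⊗(0,[f₁(x),y]) + (1,0)⊗(0,[x,f₁(y)]) − s·(1,0)⊗(0,[x,y]) − (0,w)⊗(0,[x,y]) − (1,0)⊗(f₀([x,y]),0) − (1,0)⊗(0,f₁([x,y])). -/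

import Mathlib

open TensorProduct

noncomputable section

variable (k : Type*) [CommRing k] (L : Type*) [LieRing L] [LieAlgebra k L]

abbrev X := k × L

/-- The self-distributive operation `q((a,x)⊗(b,y)) = (ab, b•x + ⁅x,y⁆)` as a bilinear map. -/
def qc : X k L →ₗ[k] X k L →ₗ[k] X k L :=
  LinearMap.mk₂ k (fun u v => (u.1 * v.1, v.1 • u.2 + ⁅u.2, v.2⁆))
    (fun m₁ m₂ n => by
      simp only [Prod.fst_add, Prod.snd_add, Prod.mk_add_mk, Prod.mk.injEq]
      exact ⟨by ring, by rw [smul_add, add_lie]; abel⟩)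
    (fun c m n => by
      simp only [Prod.smul_fst, Prod.smul_snd, Prod.smul_mk, smul_eq_mul, Prod.mk.injEq]
      exact ⟨by ring, by rw [smul_lie, smul_comm n.1 c, smul_add]⟩)
    (fun m n₁ n₂ => by
      simp only [Prod.fst_add, Prod.snd_add, Prod.mk_add_mk, Prod.mk.injEq]
      exact ⟨by ring, by rw [add_smul, lie_add]; abel⟩)
    (fun c m n => by
      simp only [Prod.smul_fst, Prod.smul_snd, Prod.smul_mk, smul_eq_mul, Prod.mk.injEq]
      exact ⟨by ring, by rw [lie_smul, smul_add, mul_smul]⟩)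

/-- The comultiplication `Δ(a,x) = (a,x)⊗(1,0) + (1,0)⊗(0,x)`. -/
def Delta : X k L →ₗ[k] X k L ⊗[k] X k L where
  toFun u := u ⊗ₜ (1, 0) + (1, 0) ⊗ₜ ((0 : k), u.2)
  map_add' u v := by
    rw [show ((0 : k), (u + v).2) = ((0 : k), u.2) + ((0 : k), v.2) by
      simp [Prod.mk_add_mk]]
    rw [add_tmul, tmul_add]; abel
  map_smul' c u := by
    rw [show ((0 : k), (c • u).2) = c • ((0 : k), u.2) by simp [Prod.smul_mk],
      tmul_smul]
    simp [smul_add, smul_tmul']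

/-- The counit `ε(a,x) = a`. -/
def eps : X k L →ₗ[k] k := LinearMap.fst k k L

/-- The Yang-Baxter operator `R(u ⊗ v) = v^{(1)} ⊗ q(u ⊗ v^{(2)})` associated to the
Lie algebra `L`. -/
def Rop : X k L ⊗[k] X k L →ₗ[k] X k L ⊗[k] X k L :=
  TensorProduct.lift <| LinearMap.mk₂ k
    (fun u v => (LinearMap.lTensor (X k L) (qc k L u)) (Delta k L v))
    (fun u₁ u₂ v => by simp [map_add, LinearMap.lTensor_add, LinearMap.add_apply])
    (fun c u v => by simp [map_smul, LinearMap.lTensor_smul, LinearMap.smul_apply])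
    (fun u v₁ v₂ => by simp)
    (fun c u v => by simp)

variable {k}

/-- `F ⊗ 1` acting on the first two factors of `V ⊗ (V ⊗ V)`. -/
def map12 {V : Type*} [AddCommGroup V] [Module k V]
    (F : V ⊗[k] V →ₗ[k] V ⊗[k] V) :
    V ⊗[k] (V ⊗[k] V) →ₗ[k] V ⊗[k] (V ⊗[k] V) :=
  (TensorProduct.assoc k V V V).toLinearMap ∘ₗ F.rTensor V ∘ₗ
    (TensorProduct.assoc k V V V).symm.toLinearMap

/-- `1 ⊗ F` acting on the last two factors of `V ⊗ (V ⊗ V)`. -/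
def map23 {V : Type*} [AddCommGroup V] [Module k V]
    (F : V ⊗[k] V →ₗ[k] V ⊗[k] V) :
    V ⊗[k] (V ⊗[k] V) →ₗ[k] V ⊗[k] (V ⊗[k] V) :=
  F.lTensor V

/-- The Yang-Baxter equation for an operator `F : V ⊗ V → V ⊗ V`. -/
def YBE {V : Type*} [AddCommGroup V] [Module k V]
    (F : V ⊗[k] V →ₗ[k] V ⊗[k] V) : Prop :=
  map12 F ∘ₗ map23 F ∘ₗ map12 F = map23 F ∘ₗ map12 F ∘ₗ map23 F

/-- The second Yang-Baxter differential. -/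
def dYB {V : Type*} [AddCommGroup V] [Module k V]
    (R φ : V ⊗[k] V →ₗ[k] V ⊗[k] V) :
    V ⊗[k] (V ⊗[k] V) →ₗ[k] V ⊗[k] (V ⊗[k] V) :=
  map12 R ∘ₗ map23 R ∘ₗ map12 φ + map12 R ∘ₗ map23 φ ∘ₗ map12 R +
    map12 φ ∘ₗ map23 R ∘ₗ map12 R - map23 R ∘ₗ map12 R ∘ₗ map23 φ -
    map23 R ∘ₗ map12 φ ∘ₗ map23 R - map23 φ ∘ₗ map12 R ∘ₗ map23 R

/-- The first Yang-Baxter differential. -/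
def dYB1 {V : Type*} [AddCommGroup V] [Module k V]
    (R : V ⊗[k] V →ₗ[k] V ⊗[k] V) (f : V →ₗ[k] V) :
    V ⊗[k] V →ₗ[k] V ⊗[k] V :=
  R ∘ₗ f.rTensor V + R ∘ₗ f.lTensor V - f.rTensor V ∘ₗ R - f.lTensor V ∘ₗ R

end

open TensorProduct


lemma Rop_tmul {k : Type*} [Field k] {L : Type*} [LieRing L] [LieAlgebra k L]
    (u v : X k L) :
    Rop k L (u ⊗ₜ[k] v) =
      v ⊗ₜ[k] u + (((1 : k), (0 : L)) : X k L) ⊗ₜ[k] (((0 : k), ⁅u.2, v.2⁆) : X k L) := by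
  have h1 : qc k L u ((1 : k), (0 : L)) = u := by
    simp [qc, LinearMap.mk₂_apply]
  have h2 : qc k L u ((0 : k), v.2) = (((0 : k), ⁅u.2, v.2⁆) : X k L) := by
    simp [qc, LinearMap.mk₂_apply]
  simp [Rop, Delta, LinearMap.mk₂_apply, h1, h2]

/-- Explicit formula for the Yang-Baxter coboundary `δ¹_{YB}(f)` on simple tensors,
where `f(a,x) = a•(s,w) + (f₀(x), f₁(x))`. -/
theorem dYB1_apply {k : Type*} [Field k] {L : Type*} [LieRing L] [LieAlgebra k L]
    (f : X k L →ₗ[k] X k L) (s : k) (w : L) (f₀ : L →ₗ[k] k) (f₁ : L →ₗ[k] L)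
    (hf : ∀ (a : k) (x : L), f (a, x) = a • ((s, w) : X k L) + (f₀ x, f₁ x))
    (a b : k) (x y : L) :
    dYB1 (Rop k L) f (((a, x) : X k L) ⊗ₜ[k] ((b, y) : X k L)) =
      a • ((((1 : k), (0 : L)) : X k L) ⊗ₜ[k] (((0 : k), ⁅w, y⁆) : X k L)) +
        b • ((((1 : k), (0 : L)) : X k L) ⊗ₜ[k] (((0 : k), ⁅x, w⁆) : X k L)) +
        (((1 : k), (0 : L)) : X k L) ⊗ₜ[k] (((0 : k), ⁅f₁ x, y⁆) : X k L) +
        (((1 : k), (0 : L)) : X k L) ⊗ₜ[k] (((0 : k), ⁅x, f₁ y⁆) : X k L) -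
        s • ((((1 : k), (0 : L)) : X k L) ⊗ₜ[k] (((0 : k), ⁅x, y⁆) : X k L)) -
        (((0 : k), w) : X k L) ⊗ₜ[k] (((0 : k), ⁅x, y⁆) : X k L) -
        (((1 : k), (0 : L)) : X k L) ⊗ₜ[k] ((f₀ ⁅x, y⁆, (0 : L)) : X k L) -
        (((1 : k), (0 : L)) : X k L) ⊗ₜ[k] (((0 : k), f₁ ⁅x, y⁆) : X k L) := by
  have hfu := hf a x
  have hfv := hf b y
  simp only [dYB1, LinearMap.sub_apply, LinearMap.add_apply, LinearMap.comp_apply,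
    LinearMap.rTensor_tmul, LinearMap.lTensor_tmul, Rop_tmul, map_add,
    hfu, hfv]
  simp only [Rop_tmul, Prod.snd_add, Prod.smul_snd, smul_eq_mul]
  have hf10 : f (((1 : k), (0 : L)) : X k L) = ((s, w) : X k L) + ((f₀ 0, f₁ 0) : X k L) := by
    simpa using hf 1 0
  have hf0xy : f (((0 : k), ⁅x, y⁆) : X k L) = ((f₀ ⁅x, y⁆, f₁ ⁅x, y⁆) : X k L) := by
    simpa using hf 0 ⁅x, y⁆
  rw [hf10, hf0xy]
  simp only [map_zero]
  have e1 : ⁅a • w + f₁ x, y⁆ = a • ⁅w, y⁆ + ⁅f₁ x, y⁆ := by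
    rw [add_lie, smul_lie]
  have e2 : ⁅x, b • w + f₁ y⁆ = b • ⁅x, w⁆ + ⁅x, f₁ y⁆ := by
    rw [lie_add, lie_smul]
  rw [e1, e2]
  have sp1 : (((0 : k), a • ⁅w, y⁆ + ⁅f₁ x, y⁆) : X k L)
      = a • (((0 : k), ⁅w, y⁆) : X k L) + (((0 : k), ⁅f₁ x, y⁆) : X k L) := by
    simp [Prod.ext_iff]
  have sp2 : (((0 : k), b • ⁅x, w⁆ + ⁅x, f₁ y⁆) : X k L)
      = b • (((0 : k), ⁅x, w⁆) : X k L) + (((0 : k), ⁅x, f₁ y⁆) : X k L) := by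
    simp [Prod.ext_iff]
  have sp3 : (((s, w) : X k L) + (((0 : k), (0 : L)) : X k L))
      = s • (((1 : k), (0 : L)) : X k L) + (((0 : k), w) : X k L) := by
    simp [Prod.ext_iff]
  have sp4 : ((f₀ ⁅x, y⁆, f₁ ⁅x, y⁆) : X k L)
      = ((f₀ ⁅x, y⁆, (0 : L)) : X k L) + (((0 : k), f₁ ⁅x, y⁆) : X k L) := by
    simp [Prod.ext_iff]
  rw [sp1, sp2, sp3, sp4]
  simp only [tmul_add, add_tmul, tmul_smul, smul_tmul']
  abel
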